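/- Adding edges between distinct connected components of a graph increases the burning number by at most the number of edges added: if G is obtained from H by adding j edges, then b(H) ≤ b(G) + j. -/

import Mathlib

open SimpleGraph

/-- The set of vertices burned after `t` rounds of the burning process on `G`,
where `s i` is the source of fire chosen in round `i + 1`. -/
def burnSet {V : Type*} (G : SimpleGraph V) (s : ℕ → V) : ℕ → Set V
  | 0 => ∅
  | t + 1 => burnSet G s t ∪ {w | ∃ u ∈ burnSet G s t, G.Adj u w} ∪ {s t}

/-- The partial burning number `b(G, S)`: the least number of rounds needed to
burn every vertex of `S`. -/
noncomputable def pburn {V : Type*} (G : SimpleGraph V) (S : Set V) : ℕ :=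
  sInf {r | ∃ s : ℕ → V, S ⊆ burnSet G s r}

/-- The burning number `b(G)`. -/
noncomputable def burn {V : Type*} (G : SimpleGraph V) : ℕ :=
  pburn G Set.univ

/-- The ball of radius `t` around `v` in graph distance. -/
def gball {V : Type*} (G : SimpleGraph V) (v : V) (t : ℕ) : Set V :=
  {w | G.dist v w ≤ t}

/-- The `m × n` Cartesian grid `P_m □ P_n`; the first coordinate is the height (row). -/
def gridGraph (m n : ℕ) : SimpleGraph (Fin m × Fin n) :=
  (pathGraph m) □ (pathGraph n)

section Aux

variable {V : Type*}

lemma burnSet_subset_succ (G : SimpleGraph V) (s : ℕ → V) (t : ℕ) :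
    burnSet G s t ⊆ burnSet G s (t + 1) := fun _ hw => Or.inl (Or.inl hw)

lemma burnSet_mono (G : SimpleGraph V) (s : ℕ → V) {t t' : ℕ} (h : t ≤ t') :
    burnSet G s t ⊆ burnSet G s t' := by
  induction h with
  | refl => exact subset_rfl
  | step _ ih => exact ih.trans (burnSet_subset_succ G s _)

lemma source_mem_burnSet (G : SimpleGraph V) (s : ℕ → V) (t : ℕ) :
    s t ∈ burnSet G s (t + 1) := Or.inr rfl

lemma burn_aux (G : SimpleGraph V) (a b : V) (s : ℕ → V)
    (ha : {t | a ∈ burnSet G s t}.Nonempty)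
    (hb : {t | b ∈ burnSet G s t}.Nonempty)
    (hab : sInf {t | b ∈ burnSet G s t} ≤ sInf {t | a ∈ burnSet G s t}) :
    ∃ s' : ℕ → V, ∀ t,
      burnSet G s t ⊆ burnSet (G.deleteEdges {s(a, b)}) s' (t + 1) := by
  classical
  set ta := sInf {t | a ∈ burnSet G s t} with hta
  set tb := sInf {t | b ∈ burnSet G s t} with htb
  have hamem : a ∈ burnSet G s ta := Nat.sInf_mem ha
  have hbmem : b ∈ burnSet G s tb := Nat.sInf_mem hb
  have hta1 : 1 ≤ ta := by
    rcases Nat.eq_zero_or_pos ta with h | h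
    · rw [h] at hamem
      exact absurd hamem (by simp [burnSet])
    · exact h
  set G' := G.deleteEdges {s(a, b)} with hG'
  set s' : ℕ → V := fun i => if i + 1 < ta then s i else if i + 1 = ta then a else s (i - 1)
    with hs'
  refine ⟨s', ?_⟩
  intro t
  induction t with
  | zero => simp [burnSet]
  | succ t ih =>
    intro w hw
    have hmono : burnSet G' s' (t + 1) ⊆ burnSet G' s' (t + 2) :=
      burnSet_subset_succ G' s' (t + 1)
    rcases hw with (hw | hw) | hw
    · exact hmono (ih hw)
    · obtain ⟨u, hu, hadj⟩ := hw
      by_cases he : s(u, w) = s(a, b)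
      · rw [Sym2.eq_iff] at he
        rcases he with ⟨hu', hw'⟩ | ⟨hu', hw'⟩
        · -- u = a, w = b
          have htat : ta ≤ t := Nat.sInf_le (show a ∈ burnSet G s t from hu' ▸ hu)
          have hbt : b ∈ burnSet G s t := burnSet_mono G s (le_trans hab htat) hbmem
          rw [hw']
          exact hmono (ih hbt)
        · -- u = b, w = a : a is a source at round ta in G'
          have hta2 : ta ≤ t + 1 :=
            Nat.sInf_le (show a ∈ burnSet G s (t + 1) from
              hw' ▸ (Or.inl (Or.inr ⟨u, hu, hadj⟩)))
          have hsrc : s' (ta - 1) ∈ burnSet G' s' (ta - 1 + 1) :=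
            source_mem_burnSet G' s' (ta - 1)
          have h1 : ¬ (ta - 1 + 1 < ta) := by omega
          have h2 : ta - 1 + 1 = ta := by omega
          have hval : s' (ta - 1) = a := by
            simp only [hs']
            rw [if_neg h1, if_pos h2]
          rw [hval, h2] at hsrc
          rw [hw']
          exact burnSet_mono G' s' (by omega : ta ≤ t + 2) hsrc
      · have hadj' : G'.Adj u w := by
          rw [hG', deleteEdges_adj]
          exact ⟨hadj, by simpa using he⟩
        exact Or.inl (Or.inr ⟨u, ih hu, hadj'⟩)
    · -- w = s t
      rcases lt_or_ge (t + 1) ta with h | h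
      · have hval : s' t = s t := by rw [hs']; simp only [if_pos h]
        have := source_mem_burnSet G' s' t
        rw [hval] at this
        exact hmono (hw ▸ this)
      · have h1 : ¬ (t + 1 + 1 < ta) := by omega
        have h2 : ¬ (t + 1 + 1 = ta) := by omega
        have hval : s' (t + 1) = s t := by
          rw [hs']; simp only [if_neg h1, if_neg h2, Nat.add_sub_cancel]
        have := source_mem_burnSet G' s' (t + 1)
        rw [hval] at this
        exact hw ▸ this

lemma burn_step (G : SimpleGraph V) (a b : V) (s : ℕ → V) (r : ℕ)
    (hr : Set.univ ⊆ burnSet G s r) :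
    ∃ s' : ℕ → V, Set.univ ⊆ burnSet (G.deleteEdges {s(a, b)}) s' (r + 1) := by
  have ha : {t | a ∈ burnSet G s t}.Nonempty := ⟨r, hr (Set.mem_univ a)⟩
  have hb : {t | b ∈ burnSet G s t}.Nonempty := ⟨r, hr (Set.mem_univ b)⟩
  rcases le_total (sInf {t | b ∈ burnSet G s t}) (sInf {t | a ∈ burnSet G s t}) with h | h
  · obtain ⟨s', h'⟩ := burn_aux G a b s ha hb h
    exact ⟨s', hr.trans (h' r)⟩
  · obtain ⟨s', h'⟩ := burn_aux G b a s hb ha h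
    rw [show s(a, b) = s(b, a) from Sym2.eq_swap]
    exact ⟨s', hr.trans (h' r)⟩

lemma burn_empty [IsEmpty V] (G : SimpleGraph V) : burn G = 0 := by
  have : {r | ∃ s : ℕ → V, Set.univ ⊆ burnSet G s r} = ∅ := by
    ext r
    simp only [Set.mem_setOf_eq, Set.mem_empty_iff_false, iff_false]
    rintro ⟨s, -⟩
    exact (IsEmpty.false (s 0))
  rw [burn, pburn, this, Nat.sInf_empty]

lemma burnable [Fintype V] [Nonempty V] (G : SimpleGraph V) :
    {r | ∃ s : ℕ → V, Set.univ ⊆ burnSet G s r}.Nonempty := by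
  classical
  let e := Fintype.equivFin V
  obtain ⟨f, hf⟩ : ∃ f : ℕ → V, ∀ v : V, f (e v) = v :=
    ⟨fun i => if h : i < Fintype.card V then e.symm ⟨i, h⟩ else Classical.arbitrary V,
      fun v => by simp⟩
  refine ⟨Fintype.card V, f, fun v _ => ?_⟩
  have := source_mem_burnSet G f (e v)
  rw [hf v] at this
  exact burnSet_mono G f (e v).isLt this

lemma burn_deleteEdge_le [Fintype V] (G : SimpleGraph V) (a b : V) :
    burn (G.deleteEdges {s(a, b)}) ≤ burn G + 1 := by
  cases isEmpty_or_nonempty V with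
  | inl h => rw [burn_empty]; omega
  | inr h =>
    obtain ⟨s, hs⟩ := Nat.sInf_mem (burnable G)
    obtain ⟨s', hs'⟩ := burn_step G a b s _ hs
    exact Nat.sInf_le ⟨s', hs'⟩

end Aux

/-- If `G` is obtained from `H` by adding `j` edges, then `b(H) ≤ b(G) + j`. -/
theorem burn_add_edges {V : Type*} [Fintype V] (H G : SimpleGraph V) (hle : H ≤ G)
    (j : ℕ) (hj : G.edgeSet.ncard = H.edgeSet.ncard + j) :
    burn H ≤ burn G + j := by
  classical
  induction j generalizing G with
  | zero =>
    have hsub : H.edgeSet ⊆ G.edgeSet := edgeSet_mono hle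
    have hfin : G.edgeSet.Finite := Set.toFinite _
    have heq : H.edgeSet = G.edgeSet :=
      Set.eq_of_subset_of_ncard_le hsub (by omega) hfin
    rw [edgeSet_inj.mp heq]
    omega
  | succ j ih =>
    have hsub : H.edgeSet ⊆ G.edgeSet := edgeSet_mono hle
    have hfin : G.edgeSet.Finite := Set.toFinite _
    have hne : ∃ e, e ∈ G.edgeSet \ H.edgeSet := by
      by_contra hcon
      push_neg at hcon
      have : G.edgeSet ⊆ H.edgeSet := fun e he => by
        by_contra h'; exact hcon e ⟨he, h'⟩
      have := Set.eq_of_subset_of_ncard_le this (by omega) (hfin.subset hsub)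
      rw [this] at hj
      omega
    obtain ⟨e, heG, heH⟩ := hne
    induction e using Sym2.ind with
    | _ a b =>
      set G' := G.deleteEdges {s(a, b)} with hG'
      have hle' : H ≤ G' := by
        intro u w huw
        rw [hG', deleteEdges_adj]
        refine ⟨hle huw, ?_⟩
        simp only [Set.mem_singleton_iff]
        intro hc
        exact heH (hc ▸ (H.mem_edgeSet.mpr huw))
      have hcard : G'.edgeSet.ncard = H.edgeSet.ncard + j := by
        rw [hG', edgeSet_deleteEdges]
        have : (G.edgeSet \ {s(a, b)}).ncard = G.edgeSet.ncard - 1 := by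
          rw [Set.ncard_diff_singleton_of_mem heG]
        omega
      have h1 := ih G' hle' hcard
      have h2 : burn G' ≤ burn G + 1 := burn_deleteEdge_le G a b
      omega
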